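/- Let V : X -> [1,infinity) be measurable, and let P and Q be Markov kernels on a measurable space X with invariant probability measures mu and nu respectively, such that P is V-geometrically ergodic with constants (C_P,beta_P) and Q is V-geometrically ergodic with constants (C_Q,beta_Q). For g measurable with ||g||_V < infinity define the Poisson resolvents R_P g(x) := sum over k >= 0 of (P^k g(x) - mu(g)) and R_Q g(x) := sum over k >= 0 of (Q^k g(x) - nu(g)). Then for every measurable f with ||f||_V < infinity and every x in X: R_Q f(x) - R_P f(x) = R_P(h)(x) + ∫ R_Q f dmu, where h(y) := ∫ R_Q f(z) Q(y,dz) - ∫ R_Q f(z) P(y,dz). -/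

import Mathlib

open MeasureTheory ProbabilityTheory

/-- The action `P^k f (x) = ∫ f dP^k(x,·)` of the `k`-fold iterate of a kernel on a
function. -/
noncomputable def kernelFunIter {X : Type*} [MeasurableSpace X] (P : Kernel X X) :
    ℕ → (X → ℝ) → X → ℝ
  | 0, f => f
  | n + 1, f => fun x => ∫ y, kernelFunIter P n f y ∂(P x)



section helpers
variable {X : Type*} [MeasurableSpace X]

lemma iter_meas (P : Kernel X X) [IsSFiniteKernel P] (k : ℕ) {f : X → ℝ} (hf : Measurable f) :
    Measurable (kernelFunIter P k f) := by
  induction k with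
  | zero => exact hf
  | succ n ih =>
    have : StronglyMeasurable (Function.uncurry fun (_ : X) y => kernelFunIter P n f y) :=
      (ih.stronglyMeasurable).comp_measurable measurable_snd
    exact (StronglyMeasurable.integral_kernel_prod_right
      (f := fun (_ : X) y => kernelFunIter P n f y) this).measurable

lemma iter_const_mul (P : Kernel X X) (k : ℕ) (c : ℝ) (f : X → ℝ) :
    kernelFunIter P k (fun y => c * f y) = fun x => c * kernelFunIter P k f x := by
  induction k with
  | zero => rfl
  | succ n ih =>
    funext x
    simp only [kernelFunIter, ih]
    exact integral_const_mul c _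

lemma iter_comp (P : Kernel X X) (k : ℕ) (g : X → ℝ) :
    kernelFunIter P k (kernelFunIter P 1 g) = kernelFunIter P (k + 1) g := by
  induction k with
  | zero => rfl
  | succ n ih => funext x; simp only [kernelFunIter] at ih ⊢; rw [ih]

lemma trunc_integrable {V : X → ℝ} (hVm : Measurable V) (hV1 : ∀ x, 1 ≤ V x)
    (m : Measure X) [IsProbabilityMeasure m] (n : ℕ) :
    Integrable (fun y => min (V y) n) m := by
  refine Integrable.mono' (integrable_const (n : ℝ))
    ((hVm.min measurable_const).aestronglyMeasurable) ?_
  filter_upwards with y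
  rw [Real.norm_eq_abs, abs_of_nonneg (le_min (le_trans zero_le_one (hV1 y)) (Nat.cast_nonneg n))]
  exact min_le_right _ _

lemma integrable_V_of_trunc {V : X → ℝ} (hVm : Measurable V) (hV1 : ∀ x, 1 ≤ V x)
    (m : Measure X) [IsProbabilityMeasure m] (B : ℝ)
    (hB : ∀ n : ℕ, ∫ y, min (V y) n ∂m ≤ B) : Integrable V m := by
  refine ⟨hVm.aestronglyMeasurable, ?_⟩
  rw [hasFiniteIntegral_iff_ofReal
    (Filter.Eventually.of_forall fun y => le_trans zero_le_one (hV1 y))]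
  have key : ∫⁻ y, ENNReal.ofReal (V y) ∂m
      = ⨆ n : ℕ, ∫⁻ y, ENNReal.ofReal (min (V y) n) ∂m := by
    rw [← lintegral_iSup]
    · congr 1
      funext y
      refine le_antisymm ?_ (iSup_le fun n =>
        ENNReal.ofReal_le_ofReal (min_le_left _ _))
      refine le_iSup_of_le ⌈V y⌉₊ (ENNReal.ofReal_le_ofReal ?_)
      exact le_min le_rfl (Nat.le_ceil _)
    · exact fun n => ENNReal.measurable_ofReal.comp (hVm.min measurable_const)
    · intro i j hij y
      exact ENNReal.ofReal_le_ofReal (min_le_min le_rfl (Nat.cast_le.2 hij))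
  rw [key]
  refine lt_of_le_of_lt (iSup_le fun n => ?_) (ENNReal.ofReal_lt_top (r := B))
  rw [← ofReal_integral_eq_lintegral_ofReal (trunc_integrable hVm hV1 m n)
    (Filter.Eventually.of_forall fun y =>
      le_min (le_trans zero_le_one (hV1 y)) (Nat.cast_nonneg n))]
  exact ENNReal.ofReal_le_ofReal (hB n)

lemma integrable_dom {V : X → ℝ} {m : Measure X} (hVint : Integrable V m)
    {f : X → ℝ} (hfm : Measurable f) {c : ℝ} (hfc : ∀ y, |f y| ≤ c * V y) :
    Integrable f m := by
  refine Integrable.mono' (hVint.const_mul c) hfm.aestronglyMeasurable ?_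
  filter_upwards with y
  rw [Real.norm_eq_abs]
  exact hfc y

variable {V : X → ℝ} {K : Kernel X X} {m : Measure X} {C β : ℝ}

/-- scaled geometric ergodicity -/
lemma herg_scaled (hV1 : ∀ x, 1 ≤ V x)
    (herg : ∀ (k : ℕ) (x : X) (f : X → ℝ), Measurable f → (∀ y, |f y| ≤ V y) →
      |kernelFunIter K k f x - ∫ y, f y ∂m| ≤ C * β ^ k * V x)
    {f : X → ℝ} (hfm : Measurable f) {c : ℝ} (hc : 0 < c) (hfc : ∀ y, |f y| ≤ c * V y) :
    ∀ (k : ℕ) (x : X), |kernelFunIter K k f x - ∫ y, f y ∂m| ≤ c * C * β ^ k * V x := by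
  intro k x
  have hb : ∀ y, |c⁻¹ * f y| ≤ V y := by
    intro y
    rw [abs_mul, abs_of_nonneg (inv_nonneg.2 hc.le)]
    calc c⁻¹ * |f y| ≤ c⁻¹ * (c * V y) :=
          mul_le_mul_of_nonneg_left (hfc y) (inv_nonneg.2 hc.le)
      _ = V y := by field_simp
  have h1 := herg k x (fun y => c⁻¹ * f y) (measurable_const.mul hfm) hb
  rw [iter_const_mul, integral_const_mul, ← mul_sub, abs_mul,
    abs_of_nonneg (inv_nonneg.2 hc.le)] at h1
  have := mul_le_mul_of_nonneg_left h1 hc.le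
  rw [← mul_assoc, mul_inv_cancel₀ hc.ne', one_mul] at this
  linarith [this]

/-- pointwise bound on iterates of a dominated function -/
lemma iter_bound (hV1 : ∀ x, 1 ≤ V x) [IsProbabilityMeasure m] (hVint : Integrable V m)
    (hC : 0 ≤ C) (hβ : β ∈ Set.Ioo (0:ℝ) 1)
    (herg : ∀ (k : ℕ) (x : X) (f : X → ℝ), Measurable f → (∀ y, |f y| ≤ V y) →
      |kernelFunIter K k f x - ∫ y, f y ∂m| ≤ C * β ^ k * V x)
    {f : X → ℝ} (hfm : Measurable f) {c : ℝ} (hc : 0 < c) (hfc : ∀ y, |f y| ≤ c * V y) :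
    ∀ (k : ℕ) (y : X),
      |kernelFunIter K k f y| ≤ (c * C + c * ∫ z, V z ∂m) * V y := by
  intro k y
  have h1 := herg_scaled hV1 herg hfm hc hfc k y
  have hβk : β ^ k ≤ 1 := pow_le_one₀ hβ.1.le hβ.2.le
  have hVy : (0:ℝ) ≤ V y := le_trans zero_le_one (hV1 y)
  have hVy1 : (1:ℝ) ≤ V y := hV1 y
  have hVm_nonneg : (0:ℝ) ≤ ∫ z, V z ∂m :=
    integral_nonneg fun z => le_trans zero_le_one (hV1 z)
  have hint : |∫ z, f z ∂m| ≤ c * ∫ z, V z ∂m := by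
    calc |∫ z, f z ∂m| ≤ ∫ z, |f z| ∂m := by
          simpa [Real.norm_eq_abs] using
            norm_integral_le_integral_norm (μ := m) (f := f)
      _ ≤ ∫ z, c * V z ∂m := by
          refine integral_mono (integrable_dom hVint hfm hfc).abs (hVint.const_mul c) hfc
      _ = c * ∫ z, V z ∂m := integral_const_mul c _
  have h2 : |kernelFunIter K k f y| ≤ c * C * β ^ k * V y + |∫ z, f z ∂m| := by
    have := abs_sub_abs_le_abs_sub (kernelFunIter K k f y) (∫ z, f z ∂m)
    linarith [h1]
  calc |kernelFunIter K k f y| ≤ c * C * β ^ k * V y + c * ∫ z, V z ∂m := by linarith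
    _ ≤ c * C * 1 * V y + (c * ∫ z, V z ∂m) * V y := by
        refine add_le_add ?_ ?_
        · exact mul_le_mul_of_nonneg_right
            (mul_le_mul_of_nonneg_left hβk (by positivity)) hVy
        · exact le_mul_of_one_le_right (by positivity) hVy1
    _ = (c * C + c * ∫ z, V z ∂m) * V y := by ring

end helpers

section more
variable {X : Type*} [MeasurableSpace X] {V : X → ℝ} {K : Kernel X X} {m : Measure X} {C β : ℝ}

lemma summable_iter (hV1 : ∀ x, 1 ≤ V x) (hβ : β ∈ Set.Ioo (0:ℝ) 1)
    (herg : ∀ (k : ℕ) (x : X) (f : X → ℝ), Measurable f → (∀ y, |f y| ≤ V y) →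
      |kernelFunIter K k f x - ∫ y, f y ∂m| ≤ C * β ^ k * V x)
    {f : X → ℝ} (hfm : Measurable f) {c : ℝ} (hc : 0 < c) (hfc : ∀ y, |f y| ≤ c * V y)
    (x : X) : Summable (fun k => kernelFunIter K k f x - ∫ y, f y ∂m) := by
  refine Summable.of_abs ?_
  refine Summable.of_nonneg_of_le (fun k => abs_nonneg _) (fun k => ?_)
    ((summable_geometric_of_lt_one hβ.1.le hβ.2).mul_left (c * C * V x))
  calc |kernelFunIter K k f x - ∫ y, f y ∂m| ≤ c * C * β ^ k * V x :=
        herg_scaled hV1 herg hfm hc hfc k x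
    _ = c * C * V x * β ^ k := by ring

lemma tsum_iter_bound (hV1 : ∀ x, 1 ≤ V x) (hC : 0 ≤ C) (hβ : β ∈ Set.Ioo (0:ℝ) 1)
    (herg : ∀ (k : ℕ) (x : X) (f : X → ℝ), Measurable f → (∀ y, |f y| ≤ V y) →
      |kernelFunIter K k f x - ∫ y, f y ∂m| ≤ C * β ^ k * V x)
    {f : X → ℝ} (hfm : Measurable f) {c : ℝ} (hc : 0 < c) (hfc : ∀ y, |f y| ≤ c * V y)
    (x : X) :
    |∑' k : ℕ, (kernelFunIter K k f x - ∫ y, f y ∂m)| ≤ c * C * (1 - β)⁻¹ * V x := by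
  have hVx : (0:ℝ) ≤ V x := le_trans zero_le_one (hV1 x)
  have hgeo : Summable (fun k : ℕ => c * C * V x * β ^ k) :=
    (summable_geometric_of_lt_one hβ.1.le hβ.2).mul_left _
  have habs : Summable (fun k => |kernelFunIter K k f x - ∫ y, f y ∂m|) := by
    refine Summable.of_nonneg_of_le (fun k => abs_nonneg _) (fun k => ?_) hgeo
    calc |kernelFunIter K k f x - ∫ y, f y ∂m| ≤ c * C * β ^ k * V x :=
          herg_scaled hV1 herg hfm hc hfc k x
      _ = c * C * V x * β ^ k := by ring
  have hnorm : Summable fun k : ℕ => ‖kernelFunIter K k f x - ∫ y, f y ∂m‖ := by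
    simpa only [Real.norm_eq_abs] using habs
  have h0 := norm_tsum_le_tsum_norm hnorm
  simp only [Real.norm_eq_abs] at h0
  calc |∑' k : ℕ, (kernelFunIter K k f x - ∫ y, f y ∂m)|
      ≤ ∑' k : ℕ, |kernelFunIter K k f x - ∫ y, f y ∂m| := h0
    _ ≤ ∑' k : ℕ, c * C * V x * β ^ k := by
        refine Summable.tsum_le_tsum (fun k => ?_) habs hgeo
        calc |kernelFunIter K k f x - ∫ y, f y ∂m| ≤ c * C * β ^ k * V x :=
              herg_scaled hV1 herg hfm hc hfc k x
          _ = c * C * V x * β ^ k := by ring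
    _ = c * C * V x * (1 - β)⁻¹ := by
        rw [tsum_mul_left, tsum_geometric_of_lt_one hβ.1.le hβ.2]
    _ = c * C * (1 - β)⁻¹ * V x := by ring

lemma iter_sub [IsSFiniteKernel K] (hVK : ∀ x, Integrable V (K x))
    {f₁ f₂ : X → ℝ} (h1m : Measurable f₁) (h2m : Measurable f₂)
    {M₁ M₂ : ℝ} (hb1 : ∀ (k : ℕ) (y : X), |kernelFunIter K k f₁ y| ≤ M₁ * V y)
    (hb2 : ∀ (k : ℕ) (y : X), |kernelFunIter K k f₂ y| ≤ M₂ * V y) :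
    ∀ (k : ℕ) (x : X), kernelFunIter K k (fun y => f₁ y - f₂ y) x
      = kernelFunIter K k f₁ x - kernelFunIter K k f₂ x := by
  intro k
  induction k with
  | zero => intro x; rfl
  | succ n ih =>
    intro x
    have he : kernelFunIter K n (fun y => f₁ y - f₂ y)
        = fun y => kernelFunIter K n f₁ y - kernelFunIter K n f₂ y := funext ih
    simp only [kernelFunIter, he]
    exact integral_sub
      (integrable_dom (hVK x) (iter_meas K n h1m) (hb1 n))
      (integrable_dom (hVK x) (iter_meas K n h2m) (hb2 n))

lemma iter_add_const [IsMarkovKernel K] (hVK : ∀ x, Integrable V (K x))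
    {f : X → ℝ} (hfm : Measurable f) {M : ℝ}
    (hb : ∀ (k : ℕ) (y : X), |kernelFunIter K k f y| ≤ M * V y) (a : ℝ) :
    ∀ (k : ℕ) (x : X), kernelFunIter K k (fun y => f y + a) x = kernelFunIter K k f x + a := by
  intro k
  induction k with
  | zero => intro x; rfl
  | succ n ih =>
    intro x
    have he : kernelFunIter K n (fun y => f y + a)
        = fun y => kernelFunIter K n f y + a := funext ih
    simp only [kernelFunIter, he]
    rw [integral_add (integrable_dom (hVK x) (iter_meas K n hfm) (hb n)) (integrable_const a)]
    simp

end more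

section bind
variable {X : Type*} [MeasurableSpace X]

lemma map_snd_compProd (μ : Measure X) [SFinite μ] (P : Kernel X X) [IsSFiniteKernel P] :
    (μ ⊗ₘ P).map Prod.snd = μ.bind (fun x => P x) := by
  ext s hs
  rw [Measure.map_apply measurable_snd hs, Measure.compProd_apply (measurable_snd hs),
    Measure.bind_apply hs P.measurable.aemeasurable]
  rfl

lemma integral_bind_eq (μ : Measure X) [IsProbabilityMeasure μ] (P : Kernel X X)
    [IsMarkovKernel P] {g : X → ℝ} (hgm : Measurable g)
    (hgi : Integrable g (μ.bind (fun x => P x))) :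
    ∫ y, (∫ z, g z ∂(P y)) ∂μ = ∫ z, g z ∂(μ.bind (fun x => P x)) := by
  rw [← map_snd_compProd] at hgi ⊢
  rw [integral_map measurable_snd.aemeasurable hgm.aestronglyMeasurable]
  have hint : Integrable (fun p : X × X => g p.2) (μ ⊗ₘ P) :=
    (integrable_map_measure hgm.aestronglyMeasurable measurable_snd.aemeasurable).mp hgi
  rw [Measure.integral_compProd hint]

end bind

/-- The Poisson resolvent `R f(x) = ∑_{k ≥ 0} (P^k f(x) - μ(f))`. -/
noncomputable def resolventFun {X : Type*} [MeasurableSpace X] (P : Kernel X X)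
    (μ : Measure X) (f : X → ℝ) (x : X) : ℝ :=
  ∑' k : ℕ, (kernelFunIter P k f x - ∫ y, f y ∂μ)

/-- **Resolvent identity.**  Let `P, Q` be `V`-geometrically ergodic Markov kernels with
invariant probability measures `μ, ν` and resolvents `R_P, R_Q`.  Then for every
measurable `f` with `‖f‖_V < ∞` and every `x`:
`R_Q f(x) - R_P f(x) = R_P(h)(x) + ∫ R_Q f dμ`, where
`h(y) := ∫ R_Q f dQ(y,·) - ∫ R_Q f dP(y,·)`. -/
theorem stmt_14 {X : Type*} [MeasurableSpace X]
    (V : X → ℝ) (hVm : Measurable V) (hV1 : ∀ x, 1 ≤ V x)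
    (P Q : Kernel X X) [IsMarkovKernel P] [IsMarkovKernel Q]
    (μ ν : Measure X) [IsProbabilityMeasure μ] [IsProbabilityMeasure ν]
    (hinvP : μ.bind (fun x => P x) = μ) (hinvQ : ν.bind (fun x => Q x) = ν)
    (CP βP CQ βQ : ℝ) (hβP : βP ∈ Set.Ioo (0 : ℝ) 1) (hβQ : βQ ∈ Set.Ioo (0 : ℝ) 1)
    (hergP : ∀ (k : ℕ) (x : X) (f : X → ℝ), Measurable f → (∀ y, |f y| ≤ V y) →
      |kernelFunIter P k f x - ∫ y, f y ∂μ| ≤ CP * βP ^ k * V x)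
    (hergQ : ∀ (k : ℕ) (x : X) (f : X → ℝ), Measurable f → (∀ y, |f y| ≤ V y) →
      |kernelFunIter Q k f x - ∫ y, f y ∂ν| ≤ CQ * βQ ^ k * V x)
    (f : X → ℝ) (hfm : Measurable f) (hfV : ∃ c, ∀ x, |f x| ≤ c * V x) (x : X) :
    resolventFun Q ν f x - resolventFun P μ f x
      = resolventFun P μ
          (fun y => (∫ z, resolventFun Q ν f z ∂(Q y)) - ∫ z, resolventFun Q ν f z ∂(P y))
          x
        + ∫ y, resolventFun Q ν f y ∂μ := by
  obtain ⟨c₀, hc₀⟩ := hfV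
  have hc : (0:ℝ) < max c₀ 1 := lt_of_lt_of_le one_pos (le_max_right _ _)
  set c : ℝ := max c₀ 1 with hc_def
  have hfc : ∀ y, |f y| ≤ c * V y := fun y =>
    le_trans (hc₀ y) (mul_le_mul_of_nonneg_right (le_max_left _ _)
      (le_trans zero_le_one (hV1 y)))
  set CP' : ℝ := max CP 0 with hCP_def
  set CQ' : ℝ := max CQ 0 with hCQ_def
  have hCP' : (0:ℝ) ≤ CP' := le_max_right _ _
  have hCQ' : (0:ℝ) ≤ CQ' := le_max_right _ _
  have hergP' : ∀ (k : ℕ) (x : X) (f : X → ℝ), Measurable f → (∀ y, |f y| ≤ V y) →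
      |kernelFunIter P k f x - ∫ y, f y ∂μ| ≤ CP' * βP ^ k * V x := by
    intro k x' g hm hb
    refine le_trans (hergP k x' g hm hb) ?_
    have h1 : (0:ℝ) ≤ βP ^ k * V x' :=
      mul_nonneg (pow_nonneg hβP.1.le k) (le_trans zero_le_one (hV1 x'))
    calc CP * βP ^ k * V x' = CP * (βP ^ k * V x') := by ring
      _ ≤ CP' * (βP ^ k * V x') := mul_le_mul_of_nonneg_right (le_max_left _ _) h1
      _ = CP' * βP ^ k * V x' := by ring
  have hergQ' : ∀ (k : ℕ) (x : X) (f : X → ℝ), Measurable f → (∀ y, |f y| ≤ V y) →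
      |kernelFunIter Q k f x - ∫ y, f y ∂ν| ≤ CQ' * βQ ^ k * V x := by
    intro k x' g hm hb
    refine le_trans (hergQ k x' g hm hb) ?_
    have h1 : (0:ℝ) ≤ βQ ^ k * V x' :=
      mul_nonneg (pow_nonneg hβQ.1.le k) (le_trans zero_le_one (hV1 x'))
    calc CQ * βQ ^ k * V x' = CQ * (βQ ^ k * V x') := by ring
      _ ≤ CQ' * (βQ ^ k * V x') := mul_le_mul_of_nonneg_right (le_max_left _ _) h1
      _ = CQ' * βQ ^ k * V x' := by ring
  -- truncation bounds
  have htrm : ∀ n : ℕ, Measurable (fun y => min (V y) (n:ℝ)) :=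
    fun n => hVm.min measurable_const
  have htrb : ∀ (n : ℕ) (y : X), |min (V y) (n:ℝ)| ≤ V y := by
    intro n y
    rw [abs_of_nonneg (le_min (le_trans zero_le_one (hV1 y)) (Nat.cast_nonneg n))]
    exact min_le_left _ _
  -- integrability of V
  have hVμ : Integrable V μ := by
    refine integrable_V_of_trunc hVm hV1 μ ((1 + CP') * V x) (fun n => ?_)
    have h := hergP' 0 x (fun y => min (V y) (n:ℝ)) (htrm n) (htrb n)
    simp only [kernelFunIter, pow_zero] at h
    have h2 := abs_le.mp h
    have h3 : min (V x) (n:ℝ) ≤ V x := min_le_left _ _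
    nlinarith [h2.1, le_trans zero_le_one (hV1 x)]
  have hVν : Integrable V ν := by
    refine integrable_V_of_trunc hVm hV1 ν ((1 + CQ') * V x) (fun n => ?_)
    have h := hergQ' 0 x (fun y => min (V y) (n:ℝ)) (htrm n) (htrb n)
    simp only [kernelFunIter, pow_zero] at h
    have h2 := abs_le.mp h
    have h3 : min (V x) (n:ℝ) ≤ V x := min_le_left _ _
    nlinarith [h2.1, le_trans zero_le_one (hV1 x)]
  have hVP : ∀ y, Integrable V (P y) := by
    intro y
    refine integrable_V_of_trunc hVm hV1 (P y) ((∫ z, V z ∂μ) + CP' * βP * V y) (fun n => ?_)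
    have h := hergP' 1 y (fun z => min (V z) (n:ℝ)) (htrm n) (htrb n)
    simp only [kernelFunIter, pow_one] at h
    have h2 := abs_le.mp h
    have h3 : ∫ z, min (V z) (n:ℝ) ∂μ ≤ ∫ z, V z ∂μ :=
      integral_mono (trunc_integrable hVm hV1 μ n) hVμ (fun z => min_le_left _ _)
    linarith [h2.1]
  have hVQ : ∀ y, Integrable V (Q y) := by
    intro y
    refine integrable_V_of_trunc hVm hV1 (Q y) ((∫ z, V z ∂ν) + CQ' * βQ * V y) (fun n => ?_)
    have h := hergQ' 1 y (fun z => min (V z) (n:ℝ)) (htrm n) (htrb n)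
    simp only [kernelFunIter, pow_one] at h
    have h2 := abs_le.mp h
    have h3 : ∫ z, min (V z) (n:ℝ) ∂ν ≤ ∫ z, V z ∂ν :=
      integral_mono (trunc_integrable hVm hV1 ν n) hVν (fun z => min_le_left _ _)
    linarith [h2.1]
  -- the resolvent g of f for Q
  set g : X → ℝ := resolventFun Q ν f with hg_def
  have hsumQ : ∀ y, Summable (fun k => kernelFunIter Q k f y - ∫ z, f z ∂ν) :=
    fun y => summable_iter hV1 hβQ hergQ' hfm hc hfc y
  set Mg : ℝ := c * CQ' * (1 - βQ)⁻¹ + 1 with hMg_def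
  have hMg_pos : (0:ℝ) < Mg := by
    have h1 : (0:ℝ) ≤ (1 - βQ)⁻¹ := inv_nonneg.2 (by linarith [hβQ.2])
    have : (0:ℝ) ≤ c * CQ' * (1 - βQ)⁻¹ := by positivity
    rw [hMg_def]; linarith
  have hgb : ∀ y, |g y| ≤ Mg * V y := by
    intro y
    have h1 := tsum_iter_bound hV1 hCQ' hβQ hergQ' hfm hc hfc y
    have hVy : (0:ℝ) ≤ V y := le_trans zero_le_one (hV1 y)
    calc |g y| ≤ c * CQ' * (1 - βQ)⁻¹ * V y := h1
      _ ≤ Mg * V y := by rw [hMg_def]; nlinarith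
  have hgm : Measurable g := by
    refine measurable_of_tendsto_metrizable
      (f := fun n : ℕ => fun y => ∑ k ∈ Finset.range n, (kernelFunIter Q k f y - ∫ z, f z ∂ν))
      (fun n => Finset.measurable_sum _ (fun k _ => (iter_meas Q k hfm).sub measurable_const)) ?_
    rw [tendsto_pi_nhds]
    intro y
    exact (hsumQ y).hasSum.tendsto_sum_nat
  -- Poisson equation for Q
  have hpois : ∀ y, ∫ z, g z ∂(Q y) = g y - f y + ∫ z, f z ∂ν := by
    intro y
    have hterm_meas : ∀ k : ℕ,
        AEStronglyMeasurable (fun z => kernelFunIter Q k f z - ∫ w, f w ∂ν) (Q y) :=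
      fun k => ((iter_meas Q k hfm).sub measurable_const).aestronglyMeasurable
    have hIV : ∫⁻ z, ENNReal.ofReal (V z) ∂(Q y) ≠ ⊤ := by
      have h := (hVQ y).hasFiniteIntegral
      rw [hasFiniteIntegral_iff_ofReal
        (Filter.Eventually.of_forall fun z => le_trans zero_le_one (hV1 z))] at h
      exact h.ne
    have hlin : ∑' k : ℕ, ∫⁻ z, ‖kernelFunIter Q k f z - ∫ w, f w ∂ν‖₊ ∂(Q y) ≠ ⊤ := by
      have hb : ∀ k : ℕ, ∫⁻ z, ‖kernelFunIter Q k f z - ∫ w, f w ∂ν‖₊ ∂(Q y)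
          ≤ ENNReal.ofReal (c * CQ' * βQ ^ k) * ∫⁻ z, ENNReal.ofReal (V z) ∂(Q y) := by
        intro k
        rw [← lintegral_const_mul _ hVm.ennreal_ofReal]
        refine lintegral_mono (fun z => ?_)
        rw [← ENNReal.ofReal_mul (mul_nonneg (mul_nonneg hc.le hCQ') (pow_nonneg hβQ.1.le k)), ← enorm_eq_nnnorm, ← ofReal_norm,
          Real.norm_eq_abs]
        exact ENNReal.ofReal_le_ofReal (herg_scaled hV1 hergQ' hfm hc hfc k z)
      refine ne_top_of_le_ne_top ?_ (ENNReal.tsum_le_tsum hb)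
      rw [ENNReal.tsum_mul_right]
      refine ENNReal.mul_ne_top ?_ hIV
      rw [← ENNReal.ofReal_tsum_of_nonneg (fun k => mul_nonneg (mul_nonneg hc.le hCQ') (pow_nonneg hβQ.1.le k))
        ((summable_geometric_of_lt_one hβQ.1.le hβQ.2).mul_left (c * CQ'))]
      exact ENNReal.ofReal_ne_top
    have hsplit := integral_tsum hterm_meas hlin
    have hterm : ∀ k : ℕ, ∫ z, (kernelFunIter Q k f z - ∫ w, f w ∂ν) ∂(Q y)
        = kernelFunIter Q (k+1) f y - ∫ w, f w ∂ν := by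
      intro k
      have hint : Integrable (kernelFunIter Q k f) (Q y) :=
        integrable_dom (hVQ y) (iter_meas Q k hfm)
          (iter_bound hV1 hVν hCQ' hβQ hergQ' hfm hc hfc k)
      rw [integral_sub hint (integrable_const _), integral_const]
      have h1 : kernelFunIter Q (k+1) f y = ∫ z, kernelFunIter Q k f z ∂(Q y) := by
        simp only [kernelFunIter]
      rw [h1]
      simp
    have hfinal : ∑' k : ℕ, (kernelFunIter Q (k+1) f y - ∫ w, f w ∂ν)
        = g y - (f y - ∫ w, f w ∂ν) := by
      have h0 := Summable.tsum_eq_zero_add (hsumQ y)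
      have h1 : kernelFunIter Q 0 f y = f y := rfl
      rw [h1] at h0
      have h2 : g y = ∑' k : ℕ, (kernelFunIter Q k f y - ∫ z, f z ∂ν) := rfl
      rw [h2]
      linarith
    calc ∫ z, g z ∂(Q y)
        = ∑' k : ℕ, ∫ z, (kernelFunIter Q k f z - ∫ w, f w ∂ν) ∂(Q y) := hsplit
      _ = ∑' k : ℕ, (kernelFunIter Q (k+1) f y - ∫ w, f w ∂ν) := tsum_congr hterm
      _ = g y - (f y - ∫ w, f w ∂ν) := hfinal
      _ = g y - f y + ∫ z, f z ∂ν := by ring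
  -- bounds on iterates
  have hbg : ∀ (k : ℕ) (y : X), |kernelFunIter P k g y|
      ≤ (Mg * CP' + Mg * ∫ z, V z ∂μ) * V y :=
    iter_bound hV1 hVμ hCP' hβP hergP' hgm hMg_pos hgb
  have hbf : ∀ (k : ℕ) (y : X), |kernelFunIter P k f y|
      ≤ (c * CP' + c * ∫ z, V z ∂μ) * V y :=
    iter_bound hV1 hVμ hCP' hβP hergP' hfm hc hfc
  have hMgc_pos : (0:ℝ) < Mg + c := by linarith
  have hgf_dom : ∀ y, |g y - f y| ≤ (Mg + c) * V y := by
    intro y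
    calc |g y - f y| ≤ |g y| + |f y| := abs_sub _ _
      _ ≤ Mg * V y + c * V y := add_le_add (hgb y) (hfc y)
      _ = (Mg + c) * V y := by ring
  have hb_gf : ∀ (k : ℕ) (y : X), |kernelFunIter P k (fun y => g y - f y) y|
      ≤ ((Mg + c) * CP' + (Mg + c) * ∫ z, V z ∂μ) * V y :=
    iter_bound hV1 hVμ hCP' hβP hergP' (hgm.sub hfm) hMgc_pos hgf_dom
  have hM1_pos : (0:ℝ) < Mg + c + |∫ z, f z ∂ν| := by
    have := abs_nonneg (∫ z, f z ∂ν); linarith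
  have h1m : Measurable (fun y => g y - f y + ∫ z, f z ∂ν) :=
    (hgm.sub hfm).add_const _
  have hf1_dom : ∀ y, |g y - f y + ∫ z, f z ∂ν| ≤ (Mg + c + |∫ z, f z ∂ν|) * V y := by
    intro y
    have hVy : (1:ℝ) ≤ V y := hV1 y
    calc |g y - f y + ∫ z, f z ∂ν| ≤ |g y - f y| + |∫ z, f z ∂ν| := abs_add_le _ _
      _ ≤ (Mg + c) * V y + |∫ z, f z ∂ν| * V y := by
          refine add_le_add (hgf_dom y) ?_
          exact le_mul_of_one_le_right (abs_nonneg _) hVy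
      _ = (Mg + c + |∫ z, f z ∂ν|) * V y := by ring
  have hb_f1 : ∀ (k : ℕ) (y : X), |kernelFunIter P k (fun y => g y - f y + ∫ z, f z ∂ν) y|
      ≤ ((Mg + c + |∫ z, f z ∂ν|) * CP' + (Mg + c + |∫ z, f z ∂ν|) * ∫ z, V z ∂μ) * V y :=
    iter_bound hV1 hVμ hCP' hβP hergP' h1m hM1_pos hf1_dom
  have h2m : Measurable (kernelFunIter P 1 g) := iter_meas P 1 hgm
  have hb_f2 : ∀ (k : ℕ) (y : X), |kernelFunIter P k (kernelFunIter P 1 g) y|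
      ≤ (Mg * CP' + Mg * ∫ z, V z ∂μ) * V y := by
    intro k y
    rw [iter_comp P k g]
    exact hbg (k+1) y
  -- iterates of h
  have hiterh : ∀ (k : ℕ) (x' : X),
      kernelFunIter P k (fun y => (g y - f y + ∫ z, f z ∂ν) - kernelFunIter P 1 g y) x'
        = (kernelFunIter P k g x' - kernelFunIter P k f x' + ∫ z, f z ∂ν)
          - kernelFunIter P (k+1) g x' := by
    intro k x'
    have e1 := iter_sub hVP h1m h2m hb_f1 hb_f2 k x'
    have e2 := iter_add_const (f := fun y => g y - f y) hVP (hgm.sub hfm) hb_gf (∫ z, f z ∂ν) k x'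
    have e3 := iter_sub hVP hgm hfm hbg hbf k x'
    have e4 : kernelFunIter P k (kernelFunIter P 1 g) x' = kernelFunIter P (k+1) g x' := by
      rw [iter_comp]
    rw [e1, e2, e3, e4]
  -- integral of h against μ
  have hif1 : Integrable (fun y => g y - f y + ∫ z, f z ∂ν) μ :=
    integrable_dom hVμ h1m hf1_dom
  have hif2 : Integrable (fun y => kernelFunIter P 1 g y) μ :=
    integrable_dom hVμ h2m (fun y => hb_f2 0 y)
  have hgiμ : Integrable g μ := integrable_dom hVμ hgm hgb
  have hfiμ : Integrable f μ := integrable_dom hVμ hfm hfc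
  have hμh : ∫ y, ((g y - f y + ∫ z, f z ∂ν) - kernelFunIter P 1 g y) ∂μ
      = (∫ z, f z ∂ν) - ∫ z, f z ∂μ := by
    rw [integral_sub hif1 hif2]
    have h1 : ∫ y, (g y - f y + ∫ z, f z ∂ν) ∂μ
        = (∫ y, g y ∂μ) - (∫ y, f y ∂μ) + ∫ z, f z ∂ν := by
      have h_sub : Integrable (fun y => g y - f y) μ := hgiμ.sub hfiμ
      rw [integral_add h_sub (integrable_const _), integral_sub hgiμ hfiμ, integral_const]
      simp
    have h2 : ∫ y, kernelFunIter P 1 g y ∂μ = ∫ y, g y ∂μ := by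
      have e : ∫ y, kernelFunIter P 1 g y ∂μ = ∫ y, (∫ z, g z ∂(P y)) ∂μ := by
        simp only [kernelFunIter]
      rw [e, integral_bind_eq μ P hgm (by rw [hinvP]; exact hgiμ), hinvP]
    rw [h1, h2]
    ring
  -- summability
  have hsa : Summable (fun k => kernelFunIter P k g x - ∫ z, g z ∂μ) :=
    summable_iter hV1 hβP hergP' hgm hMg_pos hgb x
  have hsb : Summable (fun k => kernelFunIter P k f x - ∫ z, f z ∂μ) :=
    summable_iter hV1 hβP hergP' hfm hc hfc x
  have hsa' : Summable (fun k => kernelFunIter P (k+1) g x - ∫ z, g z ∂μ) :=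
    (summable_nat_add_iff 1).2 hsa
  -- the resolvent of h
  have hRh : resolventFun P μ
      (fun y => (g y - f y + ∫ z, f z ∂ν) - kernelFunIter P 1 g y) x
      = (g x - ∫ z, g z ∂μ) - resolventFun P μ f x := by
    have hterm2 : ∀ k : ℕ,
        kernelFunIter P k (fun y => (g y - f y + ∫ z, f z ∂ν) - kernelFunIter P 1 g y) x
          - ∫ y, ((g y - f y + ∫ z, f z ∂ν) - kernelFunIter P 1 g y) ∂μ
        = ((kernelFunIter P k g x - ∫ z, g z ∂μ)
            - (kernelFunIter P (k+1) g x - ∫ z, g z ∂μ))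
          - (kernelFunIter P k f x - ∫ z, f z ∂μ) := by
      intro k
      rw [hiterh k x, hμh]
      ring
    calc resolventFun P μ (fun y => (g y - f y + ∫ z, f z ∂ν) - kernelFunIter P 1 g y) x
        = ∑' k : ℕ, (((kernelFunIter P k g x - ∫ z, g z ∂μ)
            - (kernelFunIter P (k+1) g x - ∫ z, g z ∂μ))
          - (kernelFunIter P k f x - ∫ z, f z ∂μ)) := tsum_congr hterm2
      _ = (∑' k : ℕ, ((kernelFunIter P k g x - ∫ z, g z ∂μ)
            - (kernelFunIter P (k+1) g x - ∫ z, g z ∂μ)))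
          - ∑' k : ℕ, (kernelFunIter P k f x - ∫ z, f z ∂μ) :=
        Summable.tsum_sub (hsa.sub hsa') hsb
      _ = ((∑' k : ℕ, (kernelFunIter P k g x - ∫ z, g z ∂μ))
            - ∑' k : ℕ, (kernelFunIter P (k+1) g x - ∫ z, g z ∂μ))
          - ∑' k : ℕ, (kernelFunIter P k f x - ∫ z, f z ∂μ) := by
        rw [Summable.tsum_sub hsa hsa']
      _ = (kernelFunIter P 0 g x - ∫ z, g z ∂μ)
          - ∑' k : ℕ, (kernelFunIter P k f x - ∫ z, f z ∂μ) := by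
        rw [Summable.tsum_eq_zero_add hsa]
        ring
      _ = (g x - ∫ z, g z ∂μ) - resolventFun P μ f x := rfl
  -- rewrite the function h in the goal via the Poisson equation
  have hfun : (fun y => (∫ z, g z ∂(Q y)) - ∫ z, g z ∂(P y))
      = fun y => (g y - f y + ∫ z, f z ∂ν) - kernelFunIter P 1 g y := by
    funext y
    rw [hpois y]
    congr 1
  rw [hfun, hRh]
  ring
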